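/- arXiv:2203.16779 — 2 statements merged into one kernel-verified Lean document; each statement's English description precedes it below -/
import Mathlib

section
/- Let H be a real Hilbert space and L : ℝⁿ → B(H) a linear map into the bounded self-adjoint operators that is monotonically decreasing with respect to the componentwise order on ℝⁿ and the Loewner order on B(H) (i.e., d ≥ d̃ implies L(d) ⪯ L(d̃)). Let D be a diagonal matrix with positive diagonal entries δ₁,…,δ_n, and suppose that for some λ > 0 and all j ∈ {1,…,n} the operator L(D((n-1)e_j' − e_j)) has a vector g with ⟨g, L(D((n-1)e_j' − e_j)) g⟩ ≥ λ‖g‖². Then for every d ∈ ℝⁿ: if sup_{‖g‖=1} ⟨g, L(d) g⟩ < λ‖D⁻¹d‖_∞/(n-1), then min_j (d_j/δ_j) > -(1/(n-1))·max_j (d_j/δ_j). -/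
open scoped InnerProductSpace

theorem stmt2 (n : ℕ) (hn : 2 ≤ n) {H : Type*} [NormedAddCommGroup H]
    [InnerProductSpace ℝ H] [CompleteSpace H]
    (hne : (Finset.univ : Finset (Fin n)).Nonempty)
    (L : (Fin n → ℝ) →ₗ[ℝ] (H →L[ℝ] H))
    (hsa : ∀ d : Fin n → ℝ, IsSelfAdjoint (L d))
    (hmono : ∀ d d' : Fin n → ℝ, d' ≤ d → ∀ g : H, ⟪g, (L d) g⟫_ℝ ≤ ⟪g, (L d') g⟫_ℝ)
    (δ : Fin n → ℝ) (hδ : ∀ j, 0 < δ j)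
    (lam : ℝ) (hlam : 0 < lam)
    (hdef : ∀ j : Fin n, ∃ g : H, g ≠ 0 ∧
      lam * ‖g‖ ^ 2 ≤ ⟪g, (L (fun i => δ i *
        ((n - 1 : ℝ) * (if i = j then 0 else 1) - (if i = j then 1 else 0)))) g⟫_ℝ) :
    ∀ d : Fin n → ℝ,
      sSup {r : ℝ | ∃ g : H, ‖g‖ = 1 ∧ r = ⟪g, (L d) g⟫_ℝ} <
        lam * (Finset.univ.sup' hne fun j => |d j| / δ j) / (n - 1 : ℝ) →
      -(1 / (n - 1 : ℝ)) * Finset.univ.sup' hne (fun j => d j / δ j) <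
        Finset.univ.inf' hne (fun j => d j / δ j) := by
  intro d hsup
  by_contra hcon
  push_neg at hcon
  set m := Finset.univ.sup' hne (fun j => d j / δ j) with hm
  set M := Finset.univ.sup' hne (fun j => |d j| / δ j) with hM
  clear_value m M
  have hn1 : (1:ℝ) ≤ (n:ℝ) - 1 := by
    have : (2:ℝ) ≤ (n:ℝ) := by exact_mod_cast hn
    linarith
  have hn1' : (0:ℝ) < (n:ℝ) - 1 := by linarith
  obtain ⟨j₀, -, hj₀⟩ := Finset.exists_mem_eq_inf' hne (fun j => d j / δ j)
  set c := -(d j₀ / δ j₀) with hc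
  clear_value c
  have hconj : d j₀ / δ j₀ ≤ -(1 / ((n:ℝ) - 1)) * m := by
    rw [← hj₀]; exact hcon
  have heq : -(1 / ((n:ℝ) - 1)) * m = -(m / ((n:ℝ)-1)) := by ring
  have hA : m / ((n:ℝ)-1) ≤ c := by rw [hc]; rw [heq] at hconj; linarith
  have hA' : m ≤ ((n:ℝ)-1) * c := by
    have := (div_le_iff₀ hn1').mp hA; linarith
  have hle0 : d j₀ / δ j₀ ≤ m := by
    rw [hm]; exact Finset.le_sup' (fun j => d j / δ j) (Finset.mem_univ j₀)
  have hc0 : 0 ≤ c := by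
    by_contra h
    push_neg at h
    have h1 : ((n:ℝ)-2) * c ≤ 0 :=
      mul_nonpos_of_nonneg_of_nonpos (by linarith) h.le
    have he : ((n:ℝ)-1)*c = ((n:ℝ)-2)*c + c := by ring
    linarith
  have hB : M ≤ ((n:ℝ)-1) * c := by
    rw [hM]
    apply Finset.sup'_le
    intro j _
    have h1 : |d j| / δ j = |d j / δ j| := by
      rw [abs_div, abs_of_pos (hδ j)]
    rw [h1, abs_le]
    constructor
    · have : Finset.univ.inf' hne (fun j => d j / δ j) ≤ d j / δ j :=
        Finset.inf'_le (fun j => d j / δ j) (Finset.mem_univ j)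
      rw [hj₀] at this
      have h2 : 0 ≤ ((n:ℝ)-2) * c := mul_nonneg (by linarith) hc0
      have he : ((n:ℝ)-1)*c = ((n:ℝ)-2)*c + c := by ring
      linarith
    · have : d j / δ j ≤ m := by
        rw [hm]; exact Finset.le_sup' (fun j => d j / δ j) (Finset.mem_univ j)
      linarith
  set v : Fin n → ℝ := fun i => δ i *
      (((n:ℝ) - 1) * (if i = j₀ then 0 else 1) - (if i = j₀ then 1 else 0)) with hv
  have hdw : d ≤ c • v := by
    intro i
    by_cases h : i = j₀
    · subst h
      have h4 : c * δ i = -(d i) := by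
        rw [hc]; field_simp [(hδ i).ne']
      simp only [Pi.smul_apply, smul_eq_mul, hv, eq_self_iff_true, if_true]
      nlinarith [h4]
    · have hdi : d i / δ i ≤ m := by
        rw [hm]; exact Finset.le_sup' (fun j => d j / δ j) (Finset.mem_univ i)
      have : d i ≤ ((n:ℝ)-1) * c * δ i := by
        rw [div_le_iff₀ (hδ i)] at hdi
        nlinarith [hδ i]
      simp only [Pi.smul_apply, smul_eq_mul, hv, if_neg h]
      nlinarith
  obtain ⟨g, hg0, hgl⟩ := hdef j₀
  have hgn : 0 < ‖g‖ := norm_pos_iff.mpr hg0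
  have hLv : ⟪g, (L (c • v)) g⟫_ℝ = c * ⟪g, (L v) g⟫_ℝ := by
    rw [map_smul]
    simp [real_inner_smul_right]
  have key : c * (lam * ‖g‖ ^ 2) ≤ ⟪g, (L d) g⟫_ℝ := by
    calc c * (lam * ‖g‖ ^ 2) ≤ c * ⟪g, (L v) g⟫_ℝ :=
          mul_le_mul_of_nonneg_left hgl hc0
      _ = ⟪g, (L (c • v)) g⟫_ℝ := hLv.symm
      _ ≤ ⟪g, (L d) g⟫_ℝ := hmono (c • v) d hdw g
  set u : H := ‖g‖⁻¹ • g with hu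
  have hun : ‖u‖ = 1 := norm_smul_inv_norm hg0
  have huinner : ⟪u, (L d) u⟫_ℝ = ‖g‖⁻¹ * (‖g‖⁻¹ * ⟪g, (L d) g⟫_ℝ) := by
    rw [hu, map_smul, real_inner_smul_left, real_inner_smul_right]
  have hrge : c * lam ≤ ⟪u, (L d) u⟫_ℝ := by
    rw [huinner]
    have h3 : ‖g‖⁻¹ * (‖g‖⁻¹ * ⟪g, (L d) g⟫_ℝ) - c * lam
        = (‖g‖⁻¹)^2 * (⟪g, (L d) g⟫_ℝ - c * (lam * ‖g‖ ^ 2)) := by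
      field_simp
    have h4 : 0 ≤ (‖g‖⁻¹)^2 * (⟪g, (L d) g⟫_ℝ - c * (lam * ‖g‖ ^ 2)) :=
      mul_nonneg (sq_nonneg _) (by linarith)
    linarith [h3, h4]
  have hbdd : BddAbove {r : ℝ | ∃ g : H, ‖g‖ = 1 ∧ r = ⟪g, (L d) g⟫_ℝ} := by
    refine ⟨‖L d‖, ?_⟩
    rintro r ⟨g', hg', rfl⟩
    calc ⟪g', (L d) g'⟫_ℝ ≤ ‖g'‖ * ‖(L d) g'‖ := real_inner_le_norm _ _
      _ ≤ ‖g'‖ * (‖L d‖ * ‖g'‖) := by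
          apply mul_le_mul_of_nonneg_left ((L d).le_opNorm g') (norm_nonneg _)
      _ = ‖L d‖ := by rw [hg']; ring
  have hmem : ⟪u, (L d) u⟫_ℝ ∈ {r : ℝ | ∃ g : H, ‖g‖ = 1 ∧ r = ⟪g, (L d) g⟫_ℝ} :=
    ⟨u, hun, rfl⟩
  have hsSup : c * lam ≤ sSup {r : ℝ | ∃ g : H, ‖g‖ = 1 ∧ r = ⟪g, (L d) g⟫_ℝ} :=
    le_trans hrge (le_csSup hbdd hmem)
  have hfin : lam * M / ((n:ℝ) - 1) ≤ c * lam := by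
    rw [div_le_iff₀ hn1']
    nlinarith [mul_le_mul_of_nonneg_left hB hlam.le]
  linarith [lt_of_le_of_lt (le_trans hfin hsSup) hsup]
end

section
/- Let L : ℝⁿ → S_m be a linear map into the real symmetric m×m matrices that is monotonically decreasing (d ≥ d̃ implies L(d) ⪯ L(d̃) in the Loewner order), let D = diag(δ₁,…,δ_n) with δ_j > 0, and suppose λ := min_{j=1,…,n} λ_max(L(D((n-1)e_j' − e_j))) > 0. Then for every d ∈ ℝⁿ with λ_max(L(d)) < λ‖D⁻¹d‖_∞/(n-1), one has min_j (d_j/δ_j) > -(1/(n-1))·max_j (d_j/δ_j). -/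
open Matrix

/-- The largest eigenvalue of a symmetric matrix, as the supremum of the
quadratic form over unit vectors. -/
noncomputable def lamMax {m : ℕ} (A : Matrix (Fin m) (Fin m) ℝ) : ℝ :=
  sSup {r : ℝ | ∃ x : Fin m → ℝ, x ⬝ᵥ x = 1 ∧ r = x ⬝ᵥ A.mulVec x}

lemma quadSet_bddAbove {m : ℕ} (A : Matrix (Fin m) (Fin m) ℝ) :
    BddAbove {r : ℝ | ∃ x : Fin m → ℝ, x ⬝ᵥ x = 1 ∧ r = x ⬝ᵥ A.mulVec x} := by
  refine ⟨∑ i, ∑ j, |A i j|, ?_⟩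
  rintro r ⟨x, hx, rfl⟩
  have hxi : ∀ i, |x i| ≤ 1 := by
    intro i
    rw [← sq_le_one_iff_abs_le_one]
    calc x i ^ 2 ≤ ∑ j, x j ^ 2 :=
          Finset.single_le_sum (f := fun j => x j ^ 2) (fun j _ => sq_nonneg _) (Finset.mem_univ i)
      _ = 1 := by rw [← hx]; simp [dotProduct, sq]
  calc x ⬝ᵥ A.mulVec x = ∑ i, ∑ j, x i * (A i j * x j) := by
        simp [dotProduct, mulVec, Finset.mul_sum]
    _ ≤ ∑ i, ∑ j, |A i j| := by
        refine Finset.sum_le_sum fun i _ => Finset.sum_le_sum fun j _ => ?_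
        have h1 : |x i| * |A i j| ≤ |A i j| :=
          mul_le_of_le_one_left (abs_nonneg _) (hxi i)
        calc x i * (A i j * x j) ≤ |x i * (A i j * x j)| := le_abs_self _
          _ = |x i| * |A i j| * |x j| := by rw [abs_mul, abs_mul]; ring
          _ ≤ |A i j| * 1 := mul_le_mul h1 (hxi j) (abs_nonneg _) (abs_nonneg _)
          _ = |A i j| := mul_one _

lemma lamMax_mono {m : ℕ} (hm : 0 < m) {A B : Matrix (Fin m) (Fin m) ℝ}
    (h : (B - A).PosSemidef) : lamMax A ≤ lamMax B := by
  have hboth : ∀ x : Fin m → ℝ, x ⬝ᵥ A.mulVec x ≤ x ⬝ᵥ B.mulVec x := by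
    intro x
    have := h.dotProduct_mulVec_nonneg x
    simp only [star_trivial, sub_mulVec, dotProduct_sub] at this
    linarith
  have hnx : {r : ℝ | ∃ x : Fin m → ℝ, x ⬝ᵥ x = 1 ∧ r = x ⬝ᵥ A.mulVec x}.Nonempty := by
    refine ⟨_, Pi.single ⟨0, hm⟩ 1, ?_, rfl⟩
    simp [single_dotProduct]
  refine csSup_le hnx ?_
  rintro r ⟨x, hx, rfl⟩
  exact le_trans (hboth x) (le_csSup (quadSet_bddAbove B) ⟨x, hx, rfl⟩)

lemma lamMax_smul_ge {m : ℕ} (hm : 0 < m) (A : Matrix (Fin m) (Fin m) ℝ) {c : ℝ}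
    (hc : 0 ≤ c) : c * lamMax A ≤ lamMax (c • A) := by
  have hnx : {r : ℝ | ∃ x : Fin m → ℝ, x ⬝ᵥ x = 1 ∧ r = x ⬝ᵥ A.mulVec x}.Nonempty := by
    refine ⟨_, Pi.single ⟨0, hm⟩ 1, ?_, rfl⟩
    simp [single_dotProduct]
  rcases eq_or_lt_of_le hc with rfl | hc
  · simp only [zero_mul, zero_smul]
    refine le_csSup (quadSet_bddAbove 0) ⟨Pi.single ⟨0, hm⟩ 1, ?_, ?_⟩
    · simp [single_dotProduct]
    · simp
  · rw [mul_comm, ← le_div_iff₀ hc]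
    refine csSup_le hnx ?_
    rintro r ⟨x, hx, rfl⟩
    rw [le_div_iff₀ hc, mul_comm]
    refine le_csSup (quadSet_bddAbove (c • A)) ⟨x, hx, ?_⟩
    simp [smul_mulVec, dotProduct_smul]

theorem stmt3 (n m : ℕ) (hn : 2 ≤ n)
    (hne : (Finset.univ : Finset (Fin n)).Nonempty)
    (L : (Fin n → ℝ) →ₗ[ℝ] Matrix (Fin m) (Fin m) ℝ)
    (hsym : ∀ d : Fin n → ℝ, (L d).IsHermitian)
    (hmono : ∀ d d' : Fin n → ℝ, d' ≤ d → (L d' - L d).PosSemidef)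
    (δ : Fin n → ℝ) (hδ : ∀ j, 0 < δ j)
    (lam : ℝ)
    (hlam : lam = Finset.univ.inf' hne fun j : Fin n =>
      lamMax (L (fun i => δ i *
        ((n - 1 : ℝ) * (if i = j then 0 else 1) - (if i = j then 1 else 0)))))
    (hlampos : 0 < lam) :
    ∀ d : Fin n → ℝ,
      lamMax (L d) < lam * (Finset.univ.sup' hne fun j => |d j| / δ j) / (n - 1 : ℝ) →
      -(1 / (n - 1 : ℝ)) * Finset.univ.sup' hne (fun j => d j / δ j) <
        Finset.univ.inf' hne (fun j => d j / δ j) := by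
  have hn1 : (1:ℝ) ≤ (n:ℝ) - 1 := by
    have : (2:ℝ) ≤ (n:ℝ) := by exact_mod_cast hn
    linarith
  have hn0 : (0:ℝ) < (n:ℝ) - 1 := by linarith
  rcases Nat.eq_zero_or_pos m with rfl | hm
  · exfalso
    have h0 : ∀ A : Matrix (Fin 0) (Fin 0) ℝ, lamMax A = 0 := by
      intro A
      have hemp : {r : ℝ | ∃ x : Fin 0 → ℝ, x ⬝ᵥ x = 1 ∧ r = x ⬝ᵥ A.mulVec x} = ∅ := by
        ext r
        simp [dotProduct]
      rw [lamMax, hemp, Real.sSup_empty]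
    rw [hlam] at hlampos
    simp only [h0] at hlampos
    simp at hlampos
  intro d hd
  by_contra hcon
  push_neg at hcon
  obtain ⟨j₀, -, hj₀⟩ := Finset.exists_mem_eq_inf' hne (fun j => d j / δ j)
  set α := Finset.univ.inf' hne (fun j => d j / δ j) with hα
  set β := Finset.univ.sup' hne (fun j => d j / δ j) with hβ
  set μ := Finset.univ.sup' hne (fun j => |d j| / δ j) with hμ
  have hαβ : α ≤ β := by
    rw [hj₀, hβ]
    exact Finset.le_sup' (fun j => d j / δ j) (Finset.mem_univ j₀)
  have hcon' : α * ((n:ℝ) - 1) ≤ -β := by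
    have h := mul_le_mul_of_nonneg_right hcon hn0.le
    calc α * ((n:ℝ) - 1) ≤ -(1 / ((n:ℝ) - 1)) * β * ((n:ℝ) - 1) := h
      _ = -β := by field_simp
  have hα0 : α ≤ 0 := by nlinarith
  set c : ℝ := -α with hc
  have hc0 : 0 ≤ c := by linarith
  have hβc : β ≤ ((n:ℝ) - 1) * c := by rw [hc]; linarith
  set v : Fin n → ℝ := fun i => δ i *
      ((n - 1 : ℝ) * (if i = j₀ then 0 else 1) - (if i = j₀ then 1 else 0)) with hv
  have hdj₀ : d j₀ = α * δ j₀ := by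
    rw [hj₀]
    exact (div_mul_cancel₀ _ (hδ j₀).ne').symm
  have hdle : ∀ j, d j / δ j ≤ β := fun j =>
    Finset.le_sup' (fun j => d j / δ j) (Finset.mem_univ j)
  have hdge : ∀ j, α ≤ d j / δ j := fun j =>
    Finset.inf'_le (fun j => d j / δ j) (Finset.mem_univ j)
  have hdβ : ∀ j, d j ≤ β * δ j := by
    intro j
    have := hdle j
    rw [div_le_iff₀ (hδ j)] at this
    exact this
  have hdα : ∀ j, α * δ j ≤ d j := by
    intro j
    have := hdge j
    rw [le_div_iff₀ (hδ j)] at this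
    linarith
  have hcv : ∀ i, c * v i = if i = j₀ then α * δ i else ((n:ℝ) - 1) * c * δ i := by
    intro i
    by_cases h : i = j₀
    · simp only [hv, if_pos h, hc]
      ring
    · simp only [hv, if_neg h]
      ring
  have hdv : d ≤ c • v := by
    intro i
    simp only [Pi.smul_apply, smul_eq_mul]
    rw [hcv i]
    by_cases h : i = j₀
    · rw [if_pos h, h, hdj₀]
    · rw [if_neg h]
      have h2 : β * δ i ≤ ((n:ℝ) - 1) * c * δ i :=
        mul_le_mul_of_nonneg_right hβc (hδ i).le
      linarith [hdβ i]
  have hpsd := hmono (c • v) d hdv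
  have key1 : lamMax (L (c • v)) ≤ lamMax (L d) := lamMax_mono hm hpsd
  have key2 : L (c • v) = c • L v := map_smul L c v
  have key3 : c * lamMax (L v) ≤ lamMax (c • L v) := lamMax_smul_ge hm (L v) hc0
  have key4 : lam ≤ lamMax (L v) := by
    rw [hlam]
    exact Finset.inf'_le _ (Finset.mem_univ j₀)
  have hαc : α = -c := by rw [hc]; ring
  have hμc : μ ≤ ((n:ℝ) - 1) * c := by
    rw [hμ]
    refine Finset.sup'_le hne _ fun j _ => ?_
    rw [div_le_iff₀ (hδ j), abs_le]
    constructor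
    · have h1 := hdα j
      have h2 : 0 ≤ c * δ j := mul_nonneg hc0 (hδ j).le
      have h3 : α * δ j = -(c * δ j) := by rw [hαc]; ring
      have h4 : 1 * (c * δ j) ≤ ((n:ℝ) - 1) * (c * δ j) :=
        mul_le_mul_of_nonneg_right hn1 h2
      linarith
    · have h1 := hdβ j
      have h2 : β * δ j ≤ ((n:ℝ) - 1) * c * δ j :=
        mul_le_mul_of_nonneg_right hβc (hδ j).le
      linarith
  have hub : lam * μ / ((n:ℝ) - 1) ≤ lam * c := by
    rw [div_le_iff₀ hn0]
    nlinarith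
  have hlb : c * lam ≤ lamMax (L d) := by
    calc c * lam ≤ c * lamMax (L v) := mul_le_mul_of_nonneg_left key4 hc0
      _ ≤ lamMax (c • L v) := key3
      _ = lamMax (L (c • v)) := by rw [key2]
      _ ≤ lamMax (L d) := key1
  have := lt_of_lt_of_le hd hub
  linarith [this, hlb]
end
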